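/- arXiv:2302.00368 — 6 statements merged into one kernel-verified Lean document; each statement's English description precedes it below -/
import Mathlib

section
/- Let Q = (q_1,...,q_n) and R = (r_1,...,r_m) be probability vectors with parent map p, let g ∈ {1,...,n} be the ground-truth fine class, and suppose r_{p(g)} = max_k r_k (the coarse classifier correctly predicts the parent of g). Define the ensemble score s_i = q_i · r_{p(i)} / (∑_j q_j · r_{p(j)}), assuming the denominator is positive. Then s_g ≥ q_g. -/
open Finset

theorem hie_theorem1 {n m : ℕ} (q : Fin n → ℝ) (r : Fin m → ℝ)
    (p : Fin n → Fin m) (g : Fin n)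
    (hne : (univ : Finset (Fin m)).Nonempty)
    (hq0 : ∀ j, 0 ≤ q j) (hr0 : ∀ k, 0 ≤ r k)
    (hq1 : ∑ j, q j = 1) (hr1 : ∑ k, r k = 1)
    (hmax : r (p g) = univ.sup' hne r)
    (hD : 0 < ∑ j, q j * r (p j)) :
    q g * r (p g) / (∑ j, q j * r (p j)) ≥ q g := by
  have hDle : (∑ j, q j * r (p j)) ≤ r (p g) := by
    calc ∑ j, q j * r (p j) ≤ ∑ j, q j * r (p g) := by
          apply Finset.sum_le_sum
          intro j _
          exact mul_le_mul_of_nonneg_left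
            (hmax ▸ Finset.le_sup' r (Finset.mem_univ (p j))) (hq0 j)
      _ = r (p g) := by rw [← Finset.sum_mul, hq1, one_mul]
  rw [ge_iff_le, le_div_iff₀ hD]
  exact mul_le_mul_of_nonneg_left hDle (hq0 g)
end

section
/- Let Q, R be probability vectors with parent map p, ground truth g with q_g > 0, and positive denominator D. Suppose r_{p(g)} = max_k r_k. Then equality s_g = q_g holds if and only if every fine class j with q_j > 0 satisfies r_{p(j)} = r_{p(g)}. -/
open Finset

theorem hie_equality_case {n m : ℕ} (q : Fin n → ℝ) (r : Fin m → ℝ)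
    (p : Fin n → Fin m) (g : Fin n)
    (hne : (univ : Finset (Fin m)).Nonempty)
    (hq0 : ∀ j, 0 ≤ q j) (hr0 : ∀ k, 0 ≤ r k)
    (hq1 : ∑ j, q j = 1) (hr1 : ∑ k, r k = 1)
    (hqg : 0 < q g)
    (hD : 0 < ∑ j, q j * r (p j))
    (hmax : r (p g) = univ.sup' hne r) :
    q g * r (p g) / (∑ j, q j * r (p j)) = q g ↔
      ∀ j, 0 < q j → r (p j) = r (p g) := by
  set D := ∑ j, q j * r (p j) with hDdef
  have hle : ∀ j, r (p j) ≤ r (p g) := by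
    intro j
    rw [hmax]
    exact le_sup' r (mem_univ (p j))
  constructor
  · intro heq
    have hrD : r (p g) = D := by
      field_simp at heq
      linarith
    have hsum : ∑ j, q j * (r (p g) - r (p j)) = 0 := by
      have : ∑ j, q j * (r (p g) - r (p j)) = (∑ j, q j) * r (p g) - D := by
        rw [hDdef, Finset.sum_mul, ← Finset.sum_sub_distrib]
        congr 1; ext j; ring
      rw [this, hq1]; linarith
    have hzero : ∀ j ∈ (univ : Finset (Fin n)), q j * (r (p g) - r (p j)) = 0 := by
      apply (Finset.sum_eq_zero_iff_of_nonneg ?_).mp hsum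
      intro j _
      exact mul_nonneg (hq0 j) (by linarith [hle j])
    intro j hj
    have := hzero j (mem_univ j)
    rcases mul_eq_zero.mp this with h | h
    · exact absurd h (ne_of_gt hj)
    · linarith
  · intro h
    have hrD : D = r (p g) := by
      calc D = ∑ j, q j * r (p g) := by
              apply Finset.sum_congr rfl
              intro j _
              rcases lt_or_eq_of_le (hq0 j) with hqj | hqj
              · rw [h j hqj]
              · rw [← hqj]; ring
        _ = r (p g) := by rw [← Finset.sum_mul, hq1, one_mul]
    have hr : r (p g) ≠ 0 := ne_of_gt (hrD ▸ hD)
    rw [hrD, mul_div_assoc, div_self hr, mul_one]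
end

section
/- Let Q, R be probability vectors with parent map p and ground truth g. If the coarse prediction is wrong in the strong sense that r_{p(g)} = min_k r_k, then the ensemble score cannot exceed the original fine score: s_g = q_g · r_{p(g)} / D ≤ q_g, where D = ∑_j q_j · r_{p(j)} > 0. -/
open Finset

theorem hie_min_coarse_hurts {n m : ℕ} (q : Fin n → ℝ) (r : Fin m → ℝ)
    (p : Fin n → Fin m) (g : Fin n)
    (hne : (univ : Finset (Fin m)).Nonempty)
    (hq0 : ∀ j, 0 ≤ q j) (hr0 : ∀ k, 0 ≤ r k)
    (hq1 : ∑ j, q j = 1) (hr1 : ∑ k, r k = 1)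
    (hmin : r (p g) = univ.inf' hne r)
    (hD : 0 < ∑ j, q j * r (p j)) :
    q g * r (p g) / (∑ j, q j * r (p j)) ≤ q g := by
  rw [div_le_iff₀ hD]
  have hle : r (p g) ≤ ∑ j, q j * r (p j) := by
    calc r (p g) = ∑ j, q j * r (p g) := by rw [← Finset.sum_mul, hq1, one_mul]
    _ ≤ ∑ j, q j * r (p j) := by
        apply Finset.sum_le_sum
        intro j _
        exact mul_le_mul_of_nonneg_left (hmin ▸ inf'_le r (mem_univ (p j))) (hq0 j)
  exact mul_le_mul_of_nonneg_left hle (hq0 g)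
end

section
/- Consider a two-level hierarchy given by parent maps p₁ : {1,...,n} → {1,...,m} (fine to middle) and p₂ : {1,...,m} → {1,...,t} (middle to top), with probability vectors Q, R, T at the three levels. Define cascaded ensemble scores s_i proportional to q_i · r_{p₁(i)} · t_{p₂(p₁(i))}, normalized to sum to 1 (assuming the normalizer is positive). If the ground-truth fine class g satisfies r_{p₁(g)} = max_k r_k and t_{p₂(p₁(g))} = max_l t_l, then s_g ≥ q_g. -/
open Finset

theorem hie_cascaded_theorem1 {n m t : ℕ} (q : Fin n → ℝ) (r : Fin m → ℝ)
    (tv : Fin t → ℝ) (p₁ : Fin n → Fin m) (p₂ : Fin m → Fin t) (g : Fin n)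
    (hnem : (univ : Finset (Fin m)).Nonempty)
    (hnet : (univ : Finset (Fin t)).Nonempty)
    (hq0 : ∀ j, 0 ≤ q j) (hr0 : ∀ k, 0 ≤ r k) (ht0 : ∀ l, 0 ≤ tv l)
    (hq1 : ∑ j, q j = 1) (hr1 : ∑ k, r k = 1) (ht1 : ∑ l, tv l = 1)
    (hmaxr : r (p₁ g) = univ.sup' hnem r)
    (hmaxt : tv (p₂ (p₁ g)) = univ.sup' hnet tv)
    (hD : 0 < ∑ j, q j * r (p₁ j) * tv (p₂ (p₁ j))) :
    q g * r (p₁ g) * tv (p₂ (p₁ g)) / (∑ j, q j * r (p₁ j) * tv (p₂ (p₁ j))) ≥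
      q g := by
  set D := ∑ j, q j * r (p₁ j) * tv (p₂ (p₁ j)) with hDdef
  have hDle : D ≤ r (p₁ g) * tv (p₂ (p₁ g)) := by
    calc D ≤ ∑ j, q j * (r (p₁ g) * tv (p₂ (p₁ g))) := by
          apply Finset.sum_le_sum
          intro j _
          have h1 : r (p₁ j) ≤ r (p₁ g) := hmaxr ▸ le_sup' r (mem_univ _)
          have h2 : tv (p₂ (p₁ j)) ≤ tv (p₂ (p₁ g)) := hmaxt ▸ le_sup' tv (mem_univ _)
          calc q j * r (p₁ j) * tv (p₂ (p₁ j))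
              ≤ q j * r (p₁ g) * tv (p₂ (p₁ g)) :=
                mul_le_mul (mul_le_mul_of_nonneg_left h1 (hq0 j)) h2 (ht0 _)
                  (mul_nonneg (hq0 j) (hr0 _))
            _ = q j * (r (p₁ g) * tv (p₂ (p₁ g))) := mul_assoc _ _ _
      _ = r (p₁ g) * tv (p₂ (p₁ g)) := by rw [← Finset.sum_mul, hq1, one_mul]
  rw [ge_iff_le, le_div_iff₀ hD]
  nlinarith [hq0 g]
end

section
/- Let Q, R be probability vectors with parent map p, ground truth g, and positive denominator D = ∑_j q_j · r_{p(j)}. Suppose r_{p(g)} = max_k r_k. Define z_k = ∑_{j:p(j)=k} q_j. Then the multiplicative gain of the ensemble on the true class satisfies s_g / q_g = r_{p(g)} / (∑_k r_k z_k) ≥ r_{p(g)} / (z_{p(g)} · r_{p(g)} + (1 − z_{p(g)}) · r_{p(g)}) = 1, and more precisely s_g / q_g ≥ 1 / (z_{p(g)} + (1 − z_{p(g)}) · r' / r_{p(g)}) where r' = max_{k ≠ p(g)} r_k, provided q_g > 0. -/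
open Finset

theorem hie_multiplicative_gain {n m : ℕ} (q : Fin n → ℝ) (r : Fin m → ℝ)
    (p : Fin n → Fin m) (g : Fin n)
    (hne : (univ : Finset (Fin m)).Nonempty)
    (hne' : ((univ : Finset (Fin m)).erase (p g)).Nonempty)
    (hq0 : ∀ j, 0 ≤ q j) (hr0 : ∀ k, 0 ≤ r k)
    (hq1 : ∑ j, q j = 1) (hr1 : ∑ k, r k = 1)
    (hmax : r (p g) = univ.sup' hne r)
    (hD : 0 < ∑ j, q j * r (p j))
    (hqg : 0 < q g) :
    (q g * r (p g) / (∑ j, q j * r (p j))) / q g =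
        r (p g) / (∑ k, r k * ∑ j ∈ univ.filter (fun j => p j = k), q j) ∧
      (q g * r (p g) / (∑ j, q j * r (p j))) / q g ≥ 1 ∧
      (q g * r (p g) / (∑ j, q j * r (p j))) / q g ≥
        1 / ((∑ j ∈ univ.filter (fun j => p j = p g), q j) +
          (1 - ∑ j ∈ univ.filter (fun j => p j = p g), q j) *
            (((univ : Finset (Fin m)).erase (p g)).sup' hne' r) / r (p g)) := by
  set D := ∑ j, q j * r (p j) with hDdef
  set z : Fin m → ℝ := fun k => ∑ j ∈ univ.filter (fun j => p j = k), q j with hz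
  set r' := ((univ : Finset (Fin m)).erase (p g)).sup' hne' r with hr'
  have hle : ∀ k, r k ≤ r (p g) := fun k => hmax ▸ le_sup' r (mem_univ k)
  have hDle : D ≤ r (p g) := by
    calc D ≤ ∑ j, q j * r (p g) := by
            exact Finset.sum_le_sum fun j _ => mul_le_mul_of_nonneg_left (hle (p j)) (hq0 j)
      _ = r (p g) := by rw [← Finset.sum_mul, hq1, one_mul]
  have hrpos : 0 < r (p g) := lt_of_lt_of_le hD hDle
  have hDfib : ∑ k, r k * z k = D := by
    rw [hDdef]
    rw [← Finset.sum_fiberwise_of_maps_to (fun j _ => mem_univ (p j)) (fun j => q j * r (p j))]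
    refine Finset.sum_congr rfl fun k _ => ?_
    rw [hz, Finset.mul_sum]
    refine Finset.sum_congr rfl fun j hj => ?_
    rw [Finset.mem_filter] at hj
    rw [hj.2]; ring
  have hzsum : ∑ k, z k = 1 := by
    rw [hz, Finset.sum_fiberwise_of_maps_to (fun j _ => mem_univ (p j)) q, hq1]
  have hz0 : ∀ k, 0 ≤ z k := fun k => Finset.sum_nonneg fun j _ => hq0 j
  have hkey : (q g * r (p g) / D) / q g = r (p g) / D := by
    field_simp
  have hr'0 : 0 ≤ r' := by
    obtain ⟨k, hk⟩ := hne'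
    exact le_trans (hr0 k) (le_sup' r hk)
  have hzg1 : z (p g) ≤ 1 := by
    rw [← hzsum]
    exact Finset.single_le_sum (fun k _ => hz0 k) (mem_univ (p g))
  -- D ≤ z(pg) * r(pg) + (1 - z(pg)) * r'
  have hDle2 : D ≤ z (p g) * r (p g) + (1 - z (p g)) * r' := by
    rw [← hDfib, ← Finset.add_sum_erase _ _ (mem_univ (p g))]
    have h1 : ∑ k ∈ univ.erase (p g), r k * z k ≤ ∑ k ∈ univ.erase (p g), r' * z k := by
      refine Finset.sum_le_sum fun k hk => mul_le_mul_of_nonneg_right ?_ (hz0 k)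
      exact le_sup' r hk
    have h2 : ∑ k ∈ univ.erase (p g), r' * z k = (1 - z (p g)) * r' := by
      rw [← Finset.mul_sum]
      have : ∑ k ∈ univ.erase (p g), z k = 1 - z (p g) := by
        have := Finset.add_sum_erase univ z (mem_univ (p g))
        rw [hzsum] at this; linarith
      rw [this]; ring
    calc r (p g) * z (p g) + ∑ k ∈ univ.erase (p g), r k * z k
        ≤ r (p g) * z (p g) + (1 - z (p g)) * r' := by rw [← h2]; linarith
      _ = z (p g) * r (p g) + (1 - z (p g)) * r' := by ring
  have hE'pos : 0 < z (p g) * r (p g) + (1 - z (p g)) * r' := lt_of_lt_of_le hD hDle2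
  refine ⟨by rw [hkey, hDfib], ?_, ?_⟩
  · rw [hkey, ge_iff_le, le_div_iff₀ hD, one_mul]; exact hDle
  · rw [hkey]
    have hEeq : z (p g) + (1 - z (p g)) * r' / r (p g)
        = (z (p g) * r (p g) + (1 - z (p g)) * r') / r (p g) := by
      field_simp
    rw [hEeq, one_div_div]
    exact div_le_div_of_nonneg_left (le_of_lt hrpos) hD hDle2
end

section
/- Let Q, R be probability vectors with parent map p, positive denominator D, and suppose every coarse class k with z_k = ∑_{j:p(j)=k} q_j > 0 satisfies r_k > 0. Then the KL divergence from S to Q decomposes as: KL is finite and ∑_i s_i log(s_i / q_i) = ∑_k (z_k r_k / D) log(r_k / D), where s_i = q_i r_{p(i)} / D; i.e., the information added by the ensemble depends only on subtree masses and coarse probabilities. -/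
open Finset

theorem hie_kl_decomposition {n m : ℕ} (q : Fin n → ℝ) (r : Fin m → ℝ)
    (p : Fin n → Fin m)
    (hq0 : ∀ j, 0 ≤ q j) (hr0 : ∀ k, 0 ≤ r k)
    (hq1 : ∑ j, q j = 1) (hr1 : ∑ k, r k = 1)
    (hD : 0 < ∑ j, q j * r (p j))
    (hsupp : ∀ k, 0 < ∑ j ∈ univ.filter (fun j => p j = k), q j → 0 < r k) :
    ∑ i, (q i * r (p i) / (∑ j, q j * r (p j))) *
        Real.log ((q i * r (p i) / (∑ j, q j * r (p j))) / q i) =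
      ∑ k, ((∑ j ∈ univ.filter (fun j => p j = k), q j) * r k /
          (∑ j, q j * r (p j))) *
        Real.log (r k / (∑ j, q j * r (p j))) := by
  set D := ∑ j, q j * r (p j) with hDdef
  have hDne : D ≠ 0 := ne_of_gt hD
  have step1 : ∀ i : Fin n,
      (q i * r (p i) / D) * Real.log ((q i * r (p i) / D) / q i)
        = (q i * r (p i) / D) * Real.log (r (p i) / D) := by
    intro i
    rcases eq_or_ne (q i) 0 with h | h
    · simp [h]
    · congr 1
      congr 1
      field_simp
  rw [Finset.sum_congr rfl (fun i _ => step1 i)]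
  rw [← Finset.sum_fiberwise (univ : Finset (Fin n)) p
      (fun i => (q i * r (p i) / D) * Real.log (r (p i) / D))]
  refine Finset.sum_congr rfl (fun k _ => ?_)
  rw [Finset.sum_mul, Finset.sum_div, Finset.sum_congr rfl]
  · rw [← Finset.sum_mul]
  · intro j hj
    simp only [Finset.mem_filter] at hj
    rw [hj.2]
end
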